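/- arXiv:2010.05804 — 6 statements merged into one kernel-verified Lean document; each statement's English description precedes it below -/
import Mathlib

section
/- Let s be an s-number. Then for every n ∈ ℕ the entries of the matrices g_{n,s} satisfy: c_{n+1,s} > c_{n,s} > 0, c_{n+1,s} + d_{n+1,s} ≥ c_{n,s} + d_{n,s} > 0, and d_{n,s} ≤ 0. -/
/-- The 2×2 integer matrix V(m) = ((m, -1), (1, 0)). -/
def V (m : ℤ) : Matrix (Fin 2) (Fin 2) ℤ := !![m, -1; 1, 0]

/-- The matrix g_{n,s} = V(s 0) · V(s 1) ··· V(s n). -/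
def gMat (s : ℕ → ℤ) (n : ℕ) : Matrix (Fin 2) (Fin 2) ℤ :=
  ((List.range (n + 1)).map fun i => V (s i)).prod

lemma gMat_succ (s : ℕ → ℤ) (n : ℕ) :
    gMat s (n + 1) = gMat s n * V (s (n + 1)) := by
  unfold gMat
  rw [List.range_succ, List.map_append, List.prod_append]
  simp

lemma gMat_succ_c (s : ℕ → ℤ) (n : ℕ) :
    gMat s (n + 1) 1 0 = gMat s n 1 0 * s (n + 1) + gMat s n 1 1 := by
  rw [gMat_succ]
  simp [Matrix.mul_apply, V, Fin.sum_univ_two]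

lemma gMat_succ_d (s : ℕ → ℤ) (n : ℕ) :
    gMat s (n + 1) 1 1 = -(gMat s n 1 0) := by
  rw [gMat_succ]
  simp [Matrix.mul_apply, V, Fin.sum_univ_two]

lemma gMat_zero (s : ℕ → ℤ) : gMat s 0 = V (s 0) := by
  simp [gMat, List.range_succ]

lemma invariant (s : ℕ → ℤ) (hs : ∀ n : ℕ, 1 ≤ n → 2 ≤ s n) (n : ℕ) :
    0 < gMat s n 1 0 ∧ gMat s n 1 1 ≤ 0 ∧ 0 < gMat s n 1 0 + gMat s n 1 1 := by
  induction n with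
  | zero =>
    rw [gMat_zero]
    simp [V]
  | succ k ih =>
    obtain ⟨hc, hd, hcd⟩ := ih
    have hsk : 2 ≤ s (k + 1) := hs (k + 1) (by omega)
    rw [gMat_succ_c, gMat_succ_d]
    refine ⟨?_, by omega, ?_⟩ <;> nlinarith

/-- For an s-number s (s n ≥ 2 for n ≥ 1) and every n ∈ ℕ:
c_{n+1,s} > c_{n,s} > 0, c_{n+1,s} + d_{n+1,s} ≥ c_{n,s} + d_{n,s} > 0, d_{n,s} ≤ 0. -/
theorem stmt_3 (s : ℕ → ℤ) (hs : ∀ n : ℕ, 1 ≤ n → 2 ≤ s n) (n : ℕ) :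
    gMat s (n + 1) 1 0 > gMat s n 1 0 ∧ gMat s n 1 0 > 0 ∧
    gMat s (n + 1) 1 0 + gMat s (n + 1) 1 1 ≥ gMat s n 1 0 + gMat s n 1 1 ∧
    gMat s n 1 0 + gMat s n 1 1 > 0 ∧
    gMat s n 1 1 ≤ 0 := by
  obtain ⟨hc, hd, hcd⟩ := invariant s hs n
  have hsk : 2 ≤ s (n + 1) := hs (n + 1) (by omega)
  rw [gMat_succ_c, gMat_succ_d]
  refine ⟨by nlinarith, hc, by nlinarith, hcd, hd⟩
end

section
/- Let s be an s-number. Then for every n ∈ ℕ one has R_n(s) − L_n(s) = 1/A_n(s) (as rational, equivalently real, numbers). -/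
/-- The n-th right convergent R_n(s) = a_{n,s} / c_{n,s} as a real number. -/
noncomputable def R (s : ℕ → ℤ) (n : ℕ) : ℝ :=
  (gMat s n 0 0 : ℝ) / (gMat s n 1 0 : ℝ)

/-- The n-th left convergent L_n(s) = (a_{n,s}+b_{n,s})/(c_{n,s}+d_{n,s}) as a real number. -/
noncomputable def L (s : ℕ → ℤ) (n : ℕ) : ℝ :=
  ((gMat s n 0 0 : ℝ) + (gMat s n 0 1 : ℝ)) / ((gMat s n 1 0 : ℝ) + (gMat s n 1 1 : ℝ))

/-- The n-th accuracy A_n(s) = (c_{n,s}+d_{n,s})·c_{n,s}, an integer. -/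
def A (s : ℕ → ℤ) (n : ℕ) : ℤ :=
  (gMat s n 1 0 + gMat s n 1 1) * gMat s n 1 0

lemma det_gMat (s : ℕ → ℤ) (n : ℕ) : (gMat s n).det = 1 := by
  induction n with
  | zero => simp [gMat, V, List.range_succ, Matrix.det_fin_two_of]
  | succ n ih =>
      rw [gMat_succ, Matrix.det_mul, ih]
      simp [V, Matrix.det_fin_two_of]

lemma gMat_pos (s : ℕ → ℤ) (hs : ∀ n : ℕ, 1 ≤ n → 2 ≤ s n) (n : ℕ) :
    1 ≤ gMat s n 1 0 ∧ 1 ≤ gMat s n 1 0 + gMat s n 1 1 := by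
  induction n with
  | zero => simp [gMat, V, List.range_succ]
  | succ n ih =>
      obtain ⟨h1, h2⟩ := ih
      have hsn : 2 ≤ s (n + 1) := hs (n + 1) (by omega)
      have e0 : gMat s (n + 1) 1 0 = gMat s n 1 0 * s (n + 1) + gMat s n 1 1 := by
        rw [gMat_succ]
        simp [Matrix.mul_apply, Fin.sum_univ_two, V]
      have e1 : gMat s (n + 1) 1 1 = -gMat s n 1 0 := by
        rw [gMat_succ]
        simp [Matrix.mul_apply, Fin.sum_univ_two, V]
      rw [e0, e1]
      constructor <;> nlinarith

/-- For an s-number s and every n ∈ ℕ, R_n(s) − L_n(s) = 1/A_n(s). -/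
theorem stmt_4 (s : ℕ → ℤ) (hs : ∀ n : ℕ, 1 ≤ n → 2 ≤ s n) (n : ℕ) :
    R s n - L s n = 1 / (A s n : ℝ) := by
  obtain ⟨h1, h2⟩ := gMat_pos s hs n
  have hdet : gMat s n 0 0 * gMat s n 1 1 - gMat s n 0 1 * gMat s n 1 0 = 1 := by
    have := det_gMat s n
    rwa [Matrix.det_fin_two] at this
  have hc : (gMat s n 1 0 : ℝ) ≠ 0 := by exact_mod_cast (by omega : gMat s n 1 0 ≠ 0)
  have hcd : (gMat s n 1 0 : ℝ) + (gMat s n 1 1 : ℝ) ≠ 0 := by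
    have : gMat s n 1 0 + gMat s n 1 1 ≠ 0 := by omega
    exact_mod_cast (by push_cast; exact_mod_cast this : ((gMat s n 1 0 + gMat s n 1 1 : ℤ) : ℝ) ≠ 0)
  have hdetR : (gMat s n 0 0 : ℝ) * gMat s n 1 1 - gMat s n 0 1 * gMat s n 1 0 = 1 := by
    exact_mod_cast hdet
  have key : R s n - L s n =
      ((gMat s n 0 0 : ℝ) * gMat s n 1 1 - gMat s n 0 1 * gMat s n 1 0) /
        (((gMat s n 1 0 : ℝ) + gMat s n 1 1) * gMat s n 1 0) := by
    rw [R, L]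
    field_simp
    ring
  rw [key, hdetR, A]
  push_cast
  ring_nf
end

section
/- Let x be a real number. Then for every n ∈ ℕ the convergents of ιx satisfy 0 < R_n(ιx) − x ≤ 1/A_n(ιx) and 0 ≤ x − L_n(ιx) < 1/A_n(ιx). -/
/-- The remnants r_n(x): r_0(x) = x and r_{k+1}(x) = 1/((⌊r_k(x)⌋ + 1) − r_k(x)). -/
noncomputable def rem (x : ℝ) : ℕ → ℝ
  | 0 => x
  | k + 1 => 1 / (((⌊rem x k⌋ : ℝ) + 1) - rem x k)

/-- The subtraction continued fraction ιx: (ιx)_k = ⌊r_k(x)⌋ + 1, the unique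
integer m with 0 < m − r_k(x) ≤ 1. -/
noncomputable def iota (x : ℝ) (k : ℕ) : ℤ := ⌊rem x k⌋ + 1

lemma gap_pos (x : ℝ) (k : ℕ) : 0 < ((⌊rem x k⌋ : ℝ) + 1) - rem x k := by
  have := Int.lt_floor_add_one (rem x k); linarith

lemma gap_le_one (x : ℝ) (k : ℕ) : ((⌊rem x k⌋ : ℝ) + 1) - rem x k ≤ 1 := by
  have := Int.floor_le (rem x k); linarith

lemma rem_succ_ge_one (x : ℝ) (k : ℕ) : 1 ≤ rem x (k + 1) := by
  rw [show rem x (k+1) = 1 / (((⌊rem x k⌋ : ℝ) + 1) - rem x k) from rfl]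
  exact one_le_one_div (gap_pos x k) (gap_le_one x k)

lemma rem_succ_mul (x : ℝ) (k : ℕ) :
    rem x (k + 1) * (((⌊rem x k⌋ : ℝ) + 1) - rem x k) = 1 := by
  rw [show rem x (k+1) = 1 / (((⌊rem x k⌋ : ℝ) + 1) - rem x k) from rfl]
  field_simp [ne_of_gt (gap_pos x k)]

lemma key (x : ℝ) (n : ℕ) :
    1 ≤ gMat (iota x) n 1 0 ∧
    1 ≤ gMat (iota x) n 1 0 + gMat (iota x) n 1 1 ∧
    gMat (iota x) n 0 0 * gMat (iota x) n 1 1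
      - gMat (iota x) n 0 1 * gMat (iota x) n 1 0 = 1 ∧
    x * ((gMat (iota x) n 1 0 : ℝ) * rem x (n + 1) + (gMat (iota x) n 1 1 : ℝ))
      = (gMat (iota x) n 0 0 : ℝ) * rem x (n + 1) + (gMat (iota x) n 0 1 : ℝ) := by
  induction n with
  | zero =>
    rw [gMat_zero]
    have h := rem_succ_mul x 0
    have hx0 : rem x 0 = x := rfl
    rw [hx0] at h
    have e00 : V (iota x 0) 0 0 = iota x 0 := rfl
    have e01 : V (iota x 0) 0 1 = -1 := rfl
    have e10 : V (iota x 0) 1 0 = 1 := rfl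
    have e11 : V (iota x 0) 1 1 = 0 := rfl
    refine ⟨by rw [e10], by rw [e10, e11]; norm_num, by rw [e00, e01, e10, e11]; ring, ?_⟩
    rw [e00, e01, e10, e11]
    simp only [iota, hx0]
    push_cast
    linear_combination -h
  | succ n ih =>
    obtain ⟨hc, hcd, hdet, hx⟩ := ih
    set a := gMat (iota x) n 0 0
    set b := gMat (iota x) n 0 1
    set c := gMat (iota x) n 1 0
    set d := gMat (iota x) n 1 1
    set m := iota x (n + 1) with hm
    have hma : gMat (iota x) (n+1) 0 0 = a * m + b := by
      rw [gMat_succ]; simp [V, Matrix.mul_apply, Fin.sum_univ_two, a, b, m]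
    have hmb : gMat (iota x) (n+1) 0 1 = -a := by
      rw [gMat_succ]; simp [V, Matrix.mul_apply, Fin.sum_univ_two, a]
    have hmc : gMat (iota x) (n+1) 1 0 = c * m + d := by
      rw [gMat_succ]; simp [V, Matrix.mul_apply, Fin.sum_univ_two, c, d, m]
    have hmd : gMat (iota x) (n+1) 1 1 = -c := by
      rw [gMat_succ]; simp [V, Matrix.mul_apply, Fin.sum_univ_two, c]
    have hr1 : (1 : ℝ) ≤ rem x (n + 1) := rem_succ_ge_one x n
    have hm2 : (2 : ℤ) ≤ m := by
      have : (1 : ℤ) ≤ ⌊rem x (n+1)⌋ := by exact_mod_cast Int.le_floor.mpr (by exact_mod_cast hr1)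
      simp only [hm, iota]; omega
    have hr' : rem x (n + 2) * ((m : ℝ) - rem x (n + 1)) = 1 := by
      have := rem_succ_mul x (n + 1)
      simp only [hm, iota]; push_cast; linarith [this]
    refine ⟨?_, ?_, ?_, ?_⟩
    · rw [hmc]; nlinarith
    · rw [hmc, hmd]; nlinarith
    · rw [hma, hmb, hmc, hmd]; linear_combination hdet
    · rw [hma, hmb, hmc, hmd]
      push_cast
      set r := rem x (n + 1)
      set r' := rem x (n + 2)
      have h : r * r' = (m : ℝ) * r' - 1 := by nlinarith [hr']
      linear_combination r' * hx - (x * (c : ℝ) - (a : ℝ)) * h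


lemma final_alg (x r a b c d : ℝ) (hr : 1 ≤ r) (hc : 1 ≤ c) (hcd : 1 ≤ c + d)
    (hdet : a * d - b * c = 1) (hx : x * (c * r + d) = a * r + b) :
    (0 < a / c - x ∧ a / c - x ≤ 1 / ((c + d) * c)) ∧
    (0 ≤ x - (a + b) / (c + d) ∧ x - (a + b) / (c + d) < 1 / ((c + d) * c)) := by
  have hcpos : (0 : ℝ) < c := by linarith
  have hcdpos : (0 : ℝ) < c + d := by linarith
  have hcrd : c + d ≤ c * r + d := by nlinarith
  have hcrdpos : (0 : ℝ) < c * r + d := by linarith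
  have hR : a / c - x = 1 / (c * (c * r + d)) := by
    rw [eq_div_iff (by positivity)]
    field_simp
    linear_combination (-c) * hx + hdet
  have hL : x - (a + b) / (c + d) = (r - 1) / ((c * r + d) * (c + d)) := by
    have h1 : (a + b) / (c + d) * (c + d) = a + b := div_mul_cancel₀ _ (ne_of_gt hcdpos)
    rw [eq_div_iff (by positivity)]
    calc (x - (a + b) / (c + d)) * ((c * r + d) * (c + d))
        = x * (c * r + d) * (c + d) - (a + b) / (c + d) * (c + d) * (c * r + d) := by ring
      _ = r - 1 := by rw [h1]; linear_combination (c + d) * hx + (r - 1) * hdet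
  rw [hR, hL]
  refine ⟨⟨by positivity, ?_⟩, ⟨div_nonneg (by linarith) (by positivity), ?_⟩⟩
  · apply one_div_le_one_div_of_le (mul_pos hcdpos hcpos)
    nlinarith
  · rw [div_lt_div_iff₀ (mul_pos hcrdpos hcdpos) (mul_pos hcdpos hcpos)]
    nlinarith

/-- For any real x and n ∈ ℕ, 0 < R_n(ιx) − x ≤ 1/A_n(ιx) and
0 ≤ x − L_n(ιx) < 1/A_n(ιx). -/
theorem stmt_12 (x : ℝ) (n : ℕ) :
    (0 < R (iota x) n - x ∧ R (iota x) n - x ≤ 1 / (A (iota x) n : ℝ)) ∧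
    (0 ≤ x - L (iota x) n ∧ x - L (iota x) n < 1 / (A (iota x) n : ℝ)) := by
  obtain ⟨hc, hcd, hdet, hx⟩ := key x n
  have hr : (1 : ℝ) ≤ rem x (n + 1) := rem_succ_ge_one x n
  have hcR : (1 : ℝ) ≤ (gMat (iota x) n 1 0 : ℝ) := by exact_mod_cast hc
  have hcdR : (1 : ℝ) ≤ (gMat (iota x) n 1 0 : ℝ) + (gMat (iota x) n 1 1 : ℝ) := by
    exact_mod_cast hcd
  have hdetR : (gMat (iota x) n 0 0 : ℝ) * (gMat (iota x) n 1 1 : ℝ)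
      - (gMat (iota x) n 0 1 : ℝ) * (gMat (iota x) n 1 0 : ℝ) = 1 := by exact_mod_cast hdet
  have h := final_alg x (rem x (n + 1)) (gMat (iota x) n 0 0 : ℝ) (gMat (iota x) n 0 1 : ℝ)
    (gMat (iota x) n 1 0 : ℝ) (gMat (iota x) n 1 1 : ℝ) hr hcR hcdR hdetR hx
  have hA : (A (iota x) n : ℝ) = ((gMat (iota x) n 1 0 : ℝ) + (gMat (iota x) n 1 1 : ℝ))
      * (gMat (iota x) n 1 0 : ℝ) := by
    simp only [A]; push_cast; ring
  rw [R, L, hA]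
  exact h
end

section
/- Let s be an s-number. Then the sequence of right convergents (R_n(s))_{n≥0} converges to a real number x, and the subtraction continued fraction of x recovers s: (ιx)_n = s_n for all n ∈ ℕ. -/
namespace SCFaux

/-- shorthand for the (0,0) entry -/
def aa (t : ℕ → ℤ) (n : ℕ) : ℤ := gMat t n 0 0
/-- shorthand for the (1,0) entry -/
def cc (t : ℕ → ℤ) (n : ℕ) : ℤ := gMat t n 1 0

lemma gMat_zero (t : ℕ → ℤ) : gMat t 0 = V (t 0) := by
  show (List.map (fun i => V (t i)) (List.range 1)).prod = V (t 0)
  rw [List.range_succ, List.range_zero]; simp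

lemma gMat_succ (t : ℕ → ℤ) (n : ℕ) : gMat t (n+1) = gMat t n * V (t (n+1)) := by
  unfold gMat
  rw [List.range_succ, List.map_append, List.prod_append]
  simp

lemma gMat_shift (t : ℕ → ℤ) (n : ℕ) :
    gMat t (n+1) = V (t 0) * gMat (fun k => t (k+1)) n := by
  unfold gMat
  rw [List.range_succ_eq_map]
  simp only [List.map_cons, List.map_map, List.prod_cons]
  rfl

lemma mul_entry (M N : Matrix (Fin 2) (Fin 2) ℤ) (i j : Fin 2) :
    (M * N) i j = M i 0 * N 0 j + M i 1 * N 1 j := by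
  rw [Matrix.mul_apply, Fin.sum_univ_two]

lemma aa_zero (t : ℕ → ℤ) : aa t 0 = t 0 := by simp [aa, gMat_zero, V]
lemma cc_zero (t : ℕ → ℤ) : cc t 0 = 1 := by simp [cc, gMat_zero, V]
lemma b_zero (t : ℕ → ℤ) : gMat t 0 0 1 = -1 := by simp [gMat_zero, V]
lemma d_zero (t : ℕ → ℤ) : gMat t 0 1 1 = 0 := by simp [gMat_zero, V]

lemma aa_succ (t : ℕ → ℤ) (n : ℕ) :
    aa t (n+1) = aa t n * t (n+1) + gMat t n 0 1 := by
  simp [aa, gMat_succ, mul_entry, V]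

lemma cc_succ (t : ℕ → ℤ) (n : ℕ) :
    cc t (n+1) = cc t n * t (n+1) + gMat t n 1 1 := by
  simp [cc, gMat_succ, mul_entry, V]

lemma b_succ (t : ℕ → ℤ) (n : ℕ) : gMat t (n+1) 0 1 = -(aa t n) := by
  rw [gMat_succ, mul_entry]; simp [V, aa]

lemma d_succ (t : ℕ → ℤ) (n : ℕ) : gMat t (n+1) 1 1 = -(cc t n) := by
  rw [gMat_succ, mul_entry]; simp [V, cc]

lemma aa_one (t : ℕ → ℤ) : aa t 1 = t 0 * t 1 - 1 := by
  rw [aa_succ, aa_zero, b_zero]; ring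

lemma cc_one (t : ℕ → ℤ) : cc t 1 = t 1 := by
  rw [cc_succ, cc_zero, d_zero]; ring

lemma aa_rec (t : ℕ → ℤ) (n : ℕ) : aa t (n+2) = aa t (n+1) * t (n+2) - aa t n := by
  have := aa_succ t (n+1); rw [b_succ] at this; linarith

lemma cc_rec (t : ℕ → ℤ) (n : ℕ) : cc t (n+2) = cc t (n+1) * t (n+2) - cc t n := by
  have := cc_succ t (n+1); rw [d_succ] at this; linarith

lemma det_gMat (t : ℕ → ℤ) (n : ℕ) : (gMat t n).det = 1 := by
  induction n with
  | zero => rw [gMat_zero]; simp [V, Matrix.det_fin_two_of]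
  | succ m ih =>
      rw [gMat_succ, Matrix.det_mul, ih]
      simp [V, Matrix.det_fin_two_of]

lemma det_id (t : ℕ → ℤ) (n : ℕ) :
    aa t n * cc t (n+1) - aa t (n+1) * cc t n = 1 := by
  have h := det_gMat t (n+1)
  rw [Matrix.det_fin_two] at h
  rw [b_succ, d_succ] at h
  have ha := aa_succ t n
  have hc := cc_succ t n
  simp only [aa, cc] at *
  linarith

/-- monotonicity engine -/
lemma mono_aux (t : ℕ → ℤ) (ht : ∀ k, 1 ≤ k → 2 ≤ t k) (v : ℕ → ℤ)
    (h0 : 1 ≤ v 0) (h1 : v 0 ≤ v 1)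
    (hrec : ∀ n, v (n+2) = v (n+1) * t (n+2) - v n) :
    ∀ n, 1 ≤ v n ∧ v n ≤ v (n+1) := by
  intro n
  induction n with
  | zero => exact ⟨h0, h1⟩
  | succ m ih =>
      obtain ⟨ih1, ih2⟩ := ih
      have h1m : 1 ≤ v (m+1) := le_trans ih1 ih2
      have ht2 : 2 ≤ t (m+2) := ht _ (by omega)
      refine ⟨h1m, ?_⟩
      rw [hrec]
      nlinarith

lemma cc_ge_one (t : ℕ → ℤ) (ht : ∀ k, 1 ≤ k → 2 ≤ t k) (n : ℕ) : 1 ≤ cc t n :=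
  (mono_aux t ht (cc t) (by rw [cc_zero]) (by rw [cc_zero, cc_one]; have := ht 1 le_rfl; omega)
    (cc_rec t) n).1

lemma aa_lb (t : ℕ → ℤ) (ht : ∀ k, 1 ≤ k → 2 ≤ t k) (n : ℕ) :
    (t 0 - 1) * cc t n + 1 ≤ aa t n := by
  have key := mono_aux t ht (fun n => aa t n - (t 0 - 1) * cc t n)
    (by rw [aa_zero, cc_zero]; ring_nf; omega)
    (by rw [aa_zero, cc_zero, aa_one, cc_one]
        have := ht 1 le_rfl; nlinarith)
    (by intro n; rw [aa_rec, cc_rec]; ring)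
  have := (key n).1
  omega

lemma cc_cast_pos (t : ℕ → ℤ) (ht : ∀ k, 1 ≤ k → 2 ≤ t k) (n : ℕ) :
    (0 : ℝ) < (cc t n : ℝ) := by
  have := cc_ge_one t ht n
  exact_mod_cast lt_of_lt_of_le Int.zero_lt_one (by exact_mod_cast this)

lemma R_eq (t : ℕ → ℤ) (n : ℕ) : R t n = (aa t n : ℝ) / (cc t n : ℝ) := rfl

lemma R_antitone (t : ℕ → ℤ) (ht : ∀ k, 1 ≤ k → 2 ≤ t k) : Antitone (R t) := by
  apply antitone_nat_of_succ_le
  intro n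
  rw [R_eq, R_eq]
  rw [div_le_div_iff₀ (cc_cast_pos t ht _) (cc_cast_pos t ht _)]
  have h := det_id t n
  have : (aa t n : ℝ) * (cc t (n+1) : ℝ) - (aa t (n+1) : ℝ) * (cc t n : ℝ) = 1 := by
    exact_mod_cast h
  linarith

lemma R_lb (t : ℕ → ℤ) (ht : ∀ k, 1 ≤ k → 2 ≤ t k) (n : ℕ) :
    (t 0 : ℝ) - 1 ≤ R t n := by
  rw [R_eq, le_div_iff₀ (cc_cast_pos t ht n)]
  have h := aa_lb t ht n
  have h2 : (↑(t 0) - 1 : ℝ) * (cc t n : ℝ) + 1 ≤ (aa t n : ℝ) := by exact_mod_cast h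
  linarith

noncomputable def xlim (t : ℕ → ℤ) : ℝ := ⨅ n, R t n

lemma R_bdd (t : ℕ → ℤ) (ht : ∀ k, 1 ≤ k → 2 ≤ t k) :
    BddBelow (Set.range (R t)) := by
  refine ⟨(t 0 : ℝ) - 1, ?_⟩
  rintro y ⟨n, rfl⟩
  exact R_lb t ht n

lemma tendsto_R (t : ℕ → ℤ) (ht : ∀ k, 1 ≤ k → 2 ≤ t k) :
    Filter.Tendsto (R t) Filter.atTop (nhds (xlim t)) :=
  tendsto_atTop_ciInf (R_antitone t ht) (R_bdd t ht)

lemma xlim_lb (t : ℕ → ℤ) (ht : ∀ k, 1 ≤ k → 2 ≤ t k) :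
    (t 0 : ℝ) - 1 ≤ xlim t :=
  le_ciInf (R_lb t ht)

lemma ht_shift (t : ℕ → ℤ) (ht : ∀ k, 1 ≤ k → 2 ≤ t k) :
    ∀ k, 1 ≤ k → 2 ≤ (fun k => t (k+1)) k := fun k _ => ht (k+1) (by omega)

lemma R_succ_eq (t : ℕ → ℤ) (ht : ∀ k, 1 ≤ k → 2 ≤ t k) (n : ℕ) :
    R t (n+1) = (t 0 : ℝ) - 1 / R (fun k => t (k+1)) n := by
  set t' : ℕ → ℤ := fun k => t (k+1) with ht'
  have ht'2 : ∀ k, 1 ≤ k → 2 ≤ t' k := ht_shift t ht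
  have h0 : (2:ℤ) ≤ t' 0 := ht 1 le_rfl
  have ha' : (0:ℝ) < (aa t' n : ℝ) := by
    have h1 := aa_lb t' ht'2 n
    have h2 := cc_ge_one t' ht'2 n
    have : (1:ℤ) ≤ aa t' n := by nlinarith
    exact_mod_cast lt_of_lt_of_le Int.zero_lt_one (by exact_mod_cast this)
  have hc' := cc_cast_pos t' ht'2 n
  have haE : aa t (n+1) = t 0 * aa t' n - cc t' n := by
    simp only [aa, cc, gMat_shift t n, mul_entry, V]
    simp [Matrix.cons_val_zero, Matrix.cons_val_one]
    ring
  have hcE : cc t (n+1) = aa t' n := by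
    simp only [aa, cc, gMat_shift t n, mul_entry, V]
    simp [Matrix.cons_val_zero, Matrix.cons_val_one]
    rfl
  rw [R_eq, R_eq, haE, hcE]
  push_cast
  field_simp

lemma xlim_shift_pos (t : ℕ → ℤ) (ht : ∀ k, 1 ≤ k → 2 ≤ t k)
    (h0 : 2 ≤ t 0) : (1:ℝ) ≤ xlim t := by
  have := xlim_lb t ht
  have : ((t 0 : ℝ) - 1) ≤ xlim t := this
  have h0' : (2:ℝ) ≤ (t 0 : ℝ) := by exact_mod_cast h0
  linarith

lemma xlim_eq (t : ℕ → ℤ) (ht : ∀ k, 1 ≤ k → 2 ≤ t k) :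
    xlim t = (t 0 : ℝ) - 1 / xlim (fun k => t (k+1)) := by
  set t' : ℕ → ℤ := fun k => t (k+1) with ht'
  have ht'2 : ∀ k, 1 ≤ k → 2 ≤ t' k := ht_shift t ht
  have hx' : (1:ℝ) ≤ xlim t' := xlim_shift_pos t' ht'2 (ht 1 le_rfl)
  have hne : xlim t' ≠ 0 := by linarith
  have h1 : Filter.Tendsto (fun n => R t (n+1)) Filter.atTop (nhds (xlim t)) :=
    (tendsto_R t ht).comp (Filter.tendsto_add_atTop_nat 1)
  have h2 : Filter.Tendsto (fun n => (t 0 : ℝ) - 1 / R t' n) Filter.atTop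
      (nhds ((t 0 : ℝ) - 1 / xlim t')) :=
    Filter.Tendsto.sub tendsto_const_nhds
      (Filter.Tendsto.div tendsto_const_nhds (tendsto_R t' ht'2) hne)
  have heq : (fun n => R t (n+1)) = fun n => (t 0 : ℝ) - 1 / R t' n := by
    funext n; exact R_succ_eq t ht n
  rw [heq] at h1
  exact tendsto_nhds_unique h1 h2

end SCFaux

/-- For an s-number s, the sequence of right convergents converges
to a real number x with ιx = s. -/
theorem stmt_14 (s : ℕ → ℤ) (hs : ∀ n : ℕ, 1 ≤ n → 2 ≤ s n) :
    ∃ x : ℝ, Filter.Tendsto (fun n : ℕ => R s n) Filter.atTop (nhds x) ∧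
      ∀ n : ℕ, iota x n = s n := by
  classical
  set tail : ℕ → ℕ → ℤ := fun n k => s (n + k) with htail
  have htailh : ∀ n, ∀ k, 1 ≤ k → 2 ≤ tail n k := by
    intro n k hk; exact hs (n + k) (by omega)
  have htail0 : tail 0 = s := by funext k; simp [htail]
  have hshift : ∀ n, (fun k => tail n (k+1)) = tail (n+1) := by
    intro n; funext k; simp only [htail]; congr 1; omega
  set X : ℕ → ℝ := fun n => SCFaux.xlim (tail n) with hX
  have hXrec : ∀ n, X n = (s n : ℝ) - 1 / X (n+1) := by
    intro n
    have := SCFaux.xlim_eq (tail n) (htailh n)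
    rw [hshift n] at this
    simpa [htail] using this
  have hX1 : ∀ n, (1:ℝ) ≤ X (n+1) := by
    intro n
    exact SCFaux.xlim_shift_pos (tail (n+1)) (htailh (n+1)) (by simpa [htail] using hs (n+1) (by omega))
  have hfloor : ∀ n, ⌊X n⌋ = s n - 1 := by
    intro n
    rw [Int.floor_eq_iff]
    have h1 := hX1 n
    have hr := hXrec n
    have hpos : (0:ℝ) < 1 / X (n+1) := by positivity
    have hle : 1 / X (n+1) ≤ 1 := by
      rw [div_le_one (by linarith)]; linarith
    constructor
    · push_cast; linarith
    · push_cast; linarith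
  have hrem : ∀ n, rem (X 0) n = X n := by
    intro n
    induction n with
    | zero => rfl
    | succ m ih =>
        show (1 : ℝ) / (((⌊rem (X 0) m⌋ : ℝ) + 1) - rem (X 0) m) = X (m+1)
        rw [ih, hfloor m]
        have hr := hXrec m
        have h1 := hX1 m
        have : ((s m - 1 : ℤ) : ℝ) + 1 - X m = 1 / X (m+1) := by
          push_cast; linarith
        rw [this, one_div_one_div]
  refine ⟨X 0, ?_, ?_⟩
  · have hX0 : X 0 = SCFaux.xlim s := by simp only [hX]; rw [htail0]
    rw [hX0]
    exact htail0 ▸ SCFaux.tendsto_R (tail 0) (htailh 0)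
  · intro n
    unfold iota
    rw [hrem n, hfloor n]
    omega
end

section
/- The subtraction continued fraction map ι : ℝ → (ℕ → ℤ), x ↦ ιx, is a bijection from the real numbers onto the set of s-numbers, i.e. onto { s : ℕ → ℤ | s_n ≥ 2 for all n ≥ 1 }. -/
def shiftSeq (s : ℕ → ℤ) : ℕ → ℤ := fun n => s (n + 1)

noncomputable def approx : ℕ → (ℕ → ℤ) → ℝ
  | 0, s => s 0
  | n + 1, s => s 0 - 1 / approx n (shiftSeq s)

lemma frac_pos (x : ℝ) : 0 < ((⌊x⌋ : ℝ) + 1) - x := by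
  have := Int.lt_floor_add_one x; linarith

lemma frac_le_one (x : ℝ) : ((⌊x⌋ : ℝ) + 1) - x ≤ 1 := by
  have := Int.floor_le x; linarith

lemma rem_succ (x : ℝ) (k : ℕ) :
    rem x (k + 1) = 1 / (((⌊rem x k⌋ : ℝ) + 1) - rem x k) := rfl

lemma rem_shift (k : ℕ) (x : ℝ) : rem x (k + 1) = rem (rem x 1) k := by
  induction k with
  | zero => rfl
  | succ k ih =>
    rw [rem_succ, ih]
    exact (rem_succ _ k).symm

lemma iota_shift (x : ℝ) (k : ℕ) : iota x (k + 1) = iota (rem x 1) k := by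
  unfold iota; rw [rem_shift]

lemma x_eq (x : ℝ) : x = ((⌊x⌋ : ℝ) + 1) - 1 / rem x 1 := by
  have h : rem x 1 = 1 / (((⌊x⌋ : ℝ) + 1) - x) := rfl
  rw [h, one_div_one_div]
  ring

lemma shift_iota (x : ℝ) : shiftSeq (iota x) = iota (rem x 1) :=
  funext fun k => iota_shift x k

lemma approx_iota (n : ℕ) : ∀ x : ℝ,
    x ≤ approx n (iota x) ∧ approx n (iota x) ≤ x + 1 / (n + 1) := by
  induction n with
  | zero =>
    intro x
    have h1 := Int.lt_floor_add_one x
    have h2 := Int.floor_le x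
    simp only [approx, iota, show rem x 0 = x from rfl]
    push_cast
    norm_num
    constructor <;> linarith
  | succ n ih =>
    intro x
    have hr : 1 ≤ rem x 1 := rem_succ_ge_one x 0
    obtain ⟨h1, h2⟩ := ih (rem x 1)
    set A := approx n (iota (rem x 1)) with hA
    have hApos : 0 < A := lt_of_lt_of_le one_pos (le_trans hr h1)
    have hrpos : 0 < rem x 1 := lt_of_lt_of_le one_pos hr
    have heq : approx (n + 1) (iota x) = (iota x 0 : ℝ) - 1 / A := by
      show ((iota x 0 : ℤ) : ℝ) - 1 / approx n (shiftSeq (iota x)) = _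
      rw [shift_iota]
    have hx : x = (iota x 0 : ℝ) - 1 / rem x 1 := by
      unfold iota
      push_cast
      exact x_eq x
    constructor
    · rw [heq]
      have : 1 / A ≤ 1 / rem x 1 := one_div_le_one_div_of_le hrpos h1
      linarith
    · rw [heq]
      have hn : (0:ℝ) < (n:ℝ) + 1 := by positivity
      have hn2 : (0:ℝ) < (n:ℝ) + 1 + 1 := by positivity
      have hd : (A - rem x 1) * ((n:ℝ) + 1) ≤ 1 := by
        rw [← le_div_iff₀ hn]
        linarith
      have key : (A - rem x 1) * ((n:ℝ) + 1 + 1) ≤ rem x 1 * A := by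
        nlinarith [hd, mul_nonneg (sub_nonneg.2 h1) (sub_nonneg.2 hr),
          mul_nonneg (sub_nonneg.2 hr) (by linarith : (0:ℝ) ≤ rem x 1 + 1)]
      have h3 : 1 / rem x 1 - 1 / A ≤ 1 / ((n:ℝ) + 1 + 1) := by
        rw [div_sub_div _ _ (ne_of_gt hrpos) (ne_of_gt hApos),
          div_le_div_iff₀ (by positivity) hn2]
        linarith
      push_cast
      linarith

lemma iota_injective : Function.Injective iota := by
  intro x y h
  have key : ∀ n : ℕ, |x - y| ≤ 2 / ((n : ℝ) + 1) := by
    intro n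
    obtain ⟨hx1, hx2⟩ := approx_iota n x
    obtain ⟨hy1, hy2⟩ := approx_iota n y
    rw [h] at hx1 hx2
    rw [abs_le]
    have hp : (0:ℝ) ≤ 1 / ((n:ℝ) + 1) := by positivity
    have hh : 2 / ((n:ℝ) + 1) = 1 / ((n:ℝ) + 1) + 1 / ((n:ℝ) + 1) := by ring
    constructor <;> linarith
  have htend : Filter.Tendsto (fun n : ℕ => 2 / ((n : ℝ) + 1)) Filter.atTop (nhds 0) :=
    Filter.Tendsto.div_atTop tendsto_const_nhds
      (Filter.tendsto_atTop_add_const_right _ 1 tendsto_natCast_atTop_atTop)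
  have : |x - y| ≤ 0 := ge_of_tendsto' htend key
  have := abs_nonneg (x - y)
  have : |x - y| = 0 := le_antisymm ‹|x - y| ≤ 0› ‹0 ≤ |x - y|›
  rw [abs_eq_zero] at this
  linarith [this]

def Good (s : ℕ → ℤ) : Prop := ∀ n, 2 ≤ s n

lemma good_shift {s : ℕ → ℤ} (hs : Good s) : Good (shiftSeq s) := fun n => hs (n + 1)

lemma approx_bounds : ∀ (n : ℕ) (s : ℕ → ℤ), Good s →
    ((s 0 : ℝ) - 1 < approx n s ∧ approx n s ≤ (s 0 : ℝ)) := by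
  intro n
  induction n with
  | zero => intro s hs; show (s 0 : ℝ) - 1 < (s 0 : ℝ) ∧ (s 0 : ℝ) ≤ (s 0 : ℝ); constructor <;> linarith
  | succ n ih =>
    intro s hs
    obtain ⟨h1, h2⟩ := ih (shiftSeq s) (good_shift hs)
    have hs1 : (2 : ℝ) ≤ (shiftSeq s 0 : ℝ) := by exact_mod_cast hs 1
    have hA1 : (1 : ℝ) < approx n (shiftSeq s) := by linarith
    have hApos : (0 : ℝ) < approx n (shiftSeq s) := by linarith
    have hlt : 1 / approx n (shiftSeq s) < 1 := by
      rw [div_lt_one hApos]; linarith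
    have hpos : 0 < 1 / approx n (shiftSeq s) := by positivity
    show (s 0 : ℝ) - 1 < (s 0 : ℝ) - 1 / approx n (shiftSeq s) ∧
      (s 0 : ℝ) - 1 / approx n (shiftSeq s) ≤ (s 0 : ℝ)
    constructor <;> linarith

lemma approx_anti : ∀ (n : ℕ) (s : ℕ → ℤ), Good s → approx (n + 1) s ≤ approx n s := by
  intro n
  induction n with
  | zero =>
    intro s hs
    have hs1 : (2 : ℝ) ≤ (shiftSeq s 0 : ℝ) := by exact_mod_cast hs 1
    have : 0 < 1 / approx 0 (shiftSeq s) := by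
      show 0 < 1 / ((shiftSeq s 0 : ℤ) : ℝ); positivity
    show (s 0 : ℝ) - 1 / approx 0 (shiftSeq s) ≤ (s 0 : ℝ)
    linarith
  | succ n ih =>
    intro s hs
    have h1 := (approx_bounds n (shiftSeq s) (good_shift hs)).1
    have hs1 : (2 : ℝ) ≤ (shiftSeq s 0 : ℝ) := by exact_mod_cast hs 1
    have hpos : (0 : ℝ) < approx n (shiftSeq s) := by linarith
    have hstep := ih (shiftSeq s) (good_shift hs)
    have h1' := (approx_bounds (n + 1) (shiftSeq s) (good_shift hs)).1
    have hpos2 : (0 : ℝ) < approx (n + 1) (shiftSeq s) := by linarith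
    have : 1 / approx n (shiftSeq s) ≤ 1 / approx (n + 1) (shiftSeq s) :=
      one_div_le_one_div_of_le hpos2 hstep
    show (s 0 : ℝ) - 1 / approx (n + 1) (shiftSeq s) ≤ (s 0 : ℝ) - 1 / approx n (shiftSeq s)
    linarith

noncomputable def vv (s : ℕ → ℤ) : ℝ := ⨅ n, approx n s

lemma vv_bddBelow {s : ℕ → ℤ} (hs : Good s) : BddBelow (Set.range fun n => approx n s) := by
  refine ⟨(s 0 : ℝ) - 1, ?_⟩
  rintro _ ⟨n, rfl⟩
  exact (approx_bounds n s hs).1.le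

lemma vv_tendsto {s : ℕ → ℤ} (hs : Good s) :
    Filter.Tendsto (fun n => approx n s) Filter.atTop (nhds (vv s)) :=
  tendsto_atTop_ciInf (antitone_nat_of_succ_le fun n => approx_anti n s hs) (vv_bddBelow hs)

lemma vv_lb {s : ℕ → ℤ} (hs : Good s) : (s 0 : ℝ) - 1 ≤ vv s :=
  le_ciInf fun n => (approx_bounds n s hs).1.le

lemma vv_ub {s : ℕ → ℤ} (hs : Good s) : vv s < (s 0 : ℝ) := by
  have h := ciInf_le (vv_bddBelow hs) 1
  have hs1 : (2 : ℝ) ≤ (shiftSeq s 0 : ℝ) := by exact_mod_cast hs 1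
  have : approx 1 s = (s 0 : ℝ) - 1 / ((shiftSeq s 0 : ℤ) : ℝ) := rfl
  have hpos : 0 < 1 / ((shiftSeq s 0 : ℤ) : ℝ) := by positivity
  calc vv s ≤ approx 1 s := h
    _ < (s 0 : ℝ) := by rw [this]; linarith

lemma vv_ge_one {s : ℕ → ℤ} (hs : Good s) : 1 ≤ vv s := by
  have := vv_lb hs
  have hs0 : (2 : ℝ) ≤ (s 0 : ℝ) := by exact_mod_cast hs 0
  linarith

lemma vv_eq {s : ℕ → ℤ} (hs : Good s) : vv s = (s 0 : ℝ) - 1 / vv (shiftSeq s) := by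
  have hne : vv (shiftSeq s) ≠ 0 := by
    have := vv_ge_one (good_shift hs); linarith
  have h1 : Filter.Tendsto (fun n => approx (n + 1) s) Filter.atTop (nhds (vv s)) :=
    (vv_tendsto hs).comp (Filter.tendsto_add_atTop_nat 1)
  have h2 : Filter.Tendsto (fun n => (s 0 : ℝ) - 1 / approx n (shiftSeq s)) Filter.atTop
      (nhds ((s 0 : ℝ) - 1 / vv (shiftSeq s))) :=
    Filter.Tendsto.sub tendsto_const_nhds
      (Filter.Tendsto.div tendsto_const_nhds (vv_tendsto (good_shift hs)) hne)
  have heq : (fun n => approx (n + 1) s) = fun n => (s 0 : ℝ) - 1 / approx n (shiftSeq s) := rfl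
  rw [heq] at h1
  exact tendsto_nhds_unique h1 h2

lemma vv_floor {s : ℕ → ℤ} (hs : Good s) : ⌊vv s⌋ = s 0 - 1 := by
  rw [Int.floor_eq_iff]
  constructor
  · push_cast; linarith [vv_lb hs]
  · push_cast; linarith [vv_ub hs]

/-- The map ι : ℝ → (ℕ → ℤ) is a bijection from ℝ onto the set of
s-numbers { s : ℕ → ℤ | s_n ≥ 2 for all n ≥ 1 }. -/
theorem stmt_15 :
    Set.BijOn (fun x : ℝ => iota x) Set.univ
      {s : ℕ → ℤ | ∀ n : ℕ, 1 ≤ n → 2 ≤ s n} := by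
  refine ⟨fun x _ => ?_, fun x _ y _ h => iota_injective h, fun s hs => ?_⟩
  · intro n hn
    obtain ⟨k, rfl⟩ : ∃ k, n = k + 1 := ⟨n - 1, by omega⟩
    have h1 : (1 : ℝ) ≤ rem x (k + 1) := rem_succ_ge_one x k
    have h2 : (1 : ℤ) ≤ ⌊rem x (k + 1)⌋ := Int.le_floor.mpr (by exact_mod_cast h1)
    show 2 ≤ ⌊rem x (k + 1)⌋ + 1
    omega
  · set T : ℕ → ℕ → ℤ := fun k n => s (n + k + 1) with hTdef
    have hT : ∀ k, Good (T k) := fun k n => hs (n + k + 1) (by omega)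
    have hshift : ∀ k, shiftSeq (T k) = T (k + 1) := by
      intro k
      funext n
      show s (n + 1 + k + 1) = s (n + (k + 1) + 1)
      congr 1
      omega
    have hT0 : ∀ k, T k 0 = s (k + 1) := by
      intro k
      show s (0 + k + 1) = s (k + 1)
      congr 1
      omega
    set x : ℝ := (s 0 : ℝ) - 1 / vv (T 0) with hxdef
    have hv0 : (1 : ℝ) ≤ vv (T 0) := vv_ge_one (hT 0)
    have hinv0 : 0 < 1 / vv (T 0) := by positivity
    have hinv1 : 1 / vv (T 0) ≤ 1 := by
      rw [div_le_one (by linarith)]; linarith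
    have hfloor : ⌊x⌋ = s 0 - 1 := by
      rw [Int.floor_eq_iff]
      constructor
      · push_cast; rw [hxdef]; linarith
      · push_cast; rw [hxdef]; linarith
    have hrem : ∀ k, rem x (k + 1) = vv (T k) := by
      intro k
      induction k with
      | zero =>
        rw [rem_succ]
        have : rem x 0 = x := rfl
        rw [this, hfloor]
        have hd : ((s 0 - 1 : ℤ) : ℝ) + 1 - x = 1 / vv (T 0) := by
          push_cast; rw [hxdef]; ring
        rw [hd, one_div_one_div]
      | succ k ih =>
        rw [rem_succ, ih, vv_floor (hT k)]
        have hvk1 : (1 : ℝ) ≤ vv (T (k + 1)) := vv_ge_one (hT (k + 1))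
        have hd : ((T k 0 - 1 : ℤ) : ℝ) + 1 - vv (T k) = 1 / vv (T (k + 1)) := by
          have := vv_eq (hT k)
          rw [hshift k] at this
          push_cast
          linarith [this]
        rw [hd, one_div_one_div]
    refine ⟨x, trivial, ?_⟩
    funext n
    match n with
    | 0 =>
      show ⌊rem x 0⌋ + 1 = s 0
      have : rem x 0 = x := rfl
      rw [this, hfloor]
      ring
    | k + 1 =>
      show ⌊rem x (k + 1)⌋ + 1 = s (k + 1)
      rw [hrem k, vv_floor (hT k), hT0 k]
      ring
end

section
/- Let x and y be real numbers. Then x < y if and only if the subtraction continued fraction of x is lexicographically smaller than that of y: there exists N ∈ ℕ such that (ιx)_N < (ιy)_N and (ιx)_n = (ιy)_n for all n < N. -/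
lemma rem_zero (x : ℝ) : rem x 0 = x := rfl

lemma denom_pos (r : ℝ) : 0 < ((⌊r⌋ : ℝ) + 1) - r := by
  have := Int.lt_floor_add_one r; linarith

lemma denom_le_one (r : ℝ) : ((⌊r⌋ : ℝ) + 1) - r ≤ 1 := by
  have := Int.floor_le r; linarith

lemma key_s16 (x y : ℝ) (k : ℕ) (h : iota x k = iota y k) :
    rem x k < rem y k ↔ rem x (k + 1) < rem y (k + 1) := by
  have hf : ⌊rem x k⌋ = ⌊rem y k⌋ := by unfold iota at h; omega
  have hfc : ((⌊rem x k⌋ : ℝ)) = ((⌊rem y k⌋ : ℝ)) := by exact_mod_cast hf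
  have hA := denom_pos (rem x k)
  have hB := denom_pos (rem y k)
  rw [rem_succ, rem_succ, div_lt_div_iff₀ hA hB]
  constructor <;> intro <;> nlinarith

/-- For real numbers x and y, x < y if and only if ιx is
lexicographically smaller than ιy. -/
theorem stmt_16 (x y : ℝ) :
    x < y ↔ ∃ N : ℕ, iota x N < iota y N ∧ ∀ n : ℕ, n < N → iota x n = iota y n := by
  constructor
  · intro hxy
    by_contra H
    push_neg at H
    set d := y - x with hd
    have hd0 : 0 < d := by simp [hd]; linarith
    have main : ∀ k : ℕ, (∀ n ≤ k, iota x n = iota y n) ∧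
        d + k * d ^ 2 ≤ rem y k - rem x k := by
      intro k
      induction k with
      | zero =>
        have h0 : iota x 0 = iota y 0 := by
          have hle : iota x 0 ≤ iota y 0 := by
            unfold iota
            have := Int.floor_le_floor (R := ℝ) (le_of_lt hxy)
            rw [rem_zero, rem_zero]; omega
          rcases lt_or_eq_of_le hle with hlt | he
          · obtain ⟨n, hn, _⟩ := H 0 hlt; omega
          · exact he
        refine ⟨fun n hn => by interval_cases n; exact h0, ?_⟩
        rw [rem_zero, rem_zero]; push_cast; linarith
      | succ k ih =>
        obtain ⟨heq, hbd⟩ := ih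
        have hk : iota x k = iota y k := heq k le_rfl
        have hf : ⌊rem x k⌋ = ⌊rem y k⌋ := by unfold iota at hk; omega
        have hfc : ((⌊rem x k⌋ : ℝ)) = ((⌊rem y k⌋ : ℝ)) := by exact_mod_cast hf
        have hA := denom_pos (rem x k)
        have hA1 := denom_le_one (rem x k)
        have hB := denom_pos (rem y k)
        have hB1 := denom_le_one (rem y k)
        have hkd : (0:ℝ) ≤ k := Nat.cast_nonneg k
        have hdk0 : 0 < rem y k - rem x k := by nlinarith
        have hdk1 : rem y k - rem x k < 1 := by
          have h1 := Int.lt_floor_add_one (rem y k)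
          have h2 := Int.floor_le (rem x k)
          linarith
        have hlt : rem x (k + 1) < rem y (k + 1) :=
          (key_s16 x y k hk).mp (by linarith)
        have hk1 : iota x (k + 1) = iota y (k + 1) := by
          have hle : iota x (k + 1) ≤ iota y (k + 1) := by
            unfold iota
            have := Int.floor_le_floor (le_of_lt hlt)
            omega
          rcases lt_or_eq_of_le hle with hl | he
          · obtain ⟨n, hn, hne⟩ := H (k + 1) hl
            exact absurd (heq n (by omega)) hne
          · exact he
        refine ⟨fun n hn => by rcases Nat.lt_succ_iff_lt_or_eq.mp (Nat.lt_succ_of_le hn) with h | h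
                               · exact heq n (by omega)
                               · subst h; exact hk1, ?_⟩
        rw [rem_succ, rem_succ]
        set A := ((⌊rem x k⌋ : ℝ) + 1) - rem x k with hAdef
        set B := ((⌊rem y k⌋ : ℝ) + 1) - rem y k with hBdef
        have hBA : B = A - (rem y k - rem x k) := by rw [hAdef, hBdef]; linarith
        set dk := rem y k - rem x k with hdkdef
        have e : (1 / B - 1 / A) * (A * B) = dk := by
          rw [sub_mul, show 1 / B * (A * B) = A by rw [one_div, mul_comm A B, ← mul_assoc, inv_mul_cancel₀ hB.ne', one_mul],
            show 1 / A * (A * B) = B by rw [one_div, ← mul_assoc, inv_mul_cancel₀ hA.ne', one_mul]]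
          linarith [hBA]
        have hDpos : 0 < 1 / B - 1 / A := by
          have : 1 / A < 1 / B := by
            rw [div_lt_div_iff₀ hA hB]; nlinarith
          linarith
        set D := 1 / B - 1 / A with hDdef
        have hab : A * B ≤ 1 - dk := by nlinarith
        have h6 : dk ≤ D * (1 - dk) := by
          calc dk = D * (A * B) := e.symm
            _ ≤ D * (1 - dk) := by
                exact mul_le_mul_of_nonneg_left hab hDpos.le
        have hDdk : 0 < D * dk := mul_pos hDpos hdk0
        have hdkD : dk ≤ D := by nlinarith
        have h7 : dk * dk ≤ D * dk := mul_le_mul_of_nonneg_right hdkD hdk0.le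
        have h8 : d * d ≤ dk * dk := mul_self_le_mul_self hd0.le (by linarith [mul_nonneg hkd (sq_nonneg d)])
        have hsq : d ^ 2 = d * d := sq d
        push_cast
        nlinarith [h6, h7, h8]
    obtain ⟨k, hk⟩ := exists_nat_gt (1 / d ^ 2)
    obtain ⟨heq, hbd⟩ := main k
    have hk' : iota x k = iota y k := heq k le_rfl
    have hf : ⌊rem x k⌋ = ⌊rem y k⌋ := by unfold iota at hk'; omega
    have hfc : ((⌊rem x k⌋ : ℝ)) = ((⌊rem y k⌋ : ℝ)) := by exact_mod_cast hf
    have hdk1 : rem y k - rem x k < 1 := by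
      have h1 := Int.lt_floor_add_one (rem y k)
      have h2 := Int.floor_le (rem x k)
      linarith
    have hd2 : 0 < d ^ 2 := by positivity
    have : (1:ℝ) < k * d ^ 2 := by
      rw [div_lt_iff₀ hd2] at hk
      linarith
    linarith
  · rintro ⟨N, hN, heq⟩
    have claim : ∀ j ≤ N, rem x (N - j) < rem y (N - j) := by
      intro j
      induction j with
      | zero =>
        intro _
        simp only [Nat.sub_zero]
        have h1 := Int.lt_floor_add_one (rem x N)
        have h2 := Int.floor_le (rem y N)
        have : (⌊rem x N⌋ : ℝ) + 1 ≤ (⌊rem y N⌋ : ℝ) := by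
          unfold iota at hN; exact_mod_cast by omega
        linarith
      | succ j ih =>
        intro hj
        have hkey := (key_s16 x y (N - (j + 1)) (heq _ (by omega))).mpr
        rw [show N - (j + 1) + 1 = N - j from by omega] at hkey
        exact hkey (ih (by omega))
    have := claim N le_rfl
    rwa [Nat.sub_self, rem_zero, rem_zero] at this
end
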